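/- arXiv:2012.03361 — 3 statements merged into one kernel-verified Lean document; each statement's English description precedes it below -/
import Mathlib

section
/- Let A be a positively graded commutative DG algebra with amp(H(A)) = s and A not quasi-isomorphic to zero. Let L be a nonzero semifree DG A-module with semibasis concentrated in degrees n, n+1, ..., n+m for some integers n and m ≥ 0. Then inf(H(L)) ≥ n and sup(H(L)) ≤ s + n + m, hence amp(H(L)) ≤ s + m. -/
universe u v

/-- A (positively graded, graded-commutative) differential graded algebra,
modeled as a ring with an internal `ℤ`-grading by additive subgroups,
together with a degree `-1` differential satisfying the Leibniz rule. -/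
structure DGAlgebra : Type (u + 1) where
  carrier : Type u
  [ring : Ring carrier]
  grading : ℤ → AddSubgroup carrier
  isInternal : DirectSum.IsInternal grading
  positive : ∀ i : ℤ, i < 0 → grading i = ⊥
  one_mem : (1 : carrier) ∈ grading 0
  mul_mem : ∀ {i j : ℤ} {a b : carrier}, a ∈ grading i → b ∈ grading j → a * b ∈ grading (i + j)
  d : carrier →+ carrier
  d_mem : ∀ {i : ℤ} {a : carrier}, a ∈ grading i → d a ∈ grading (i - 1)
  d_d : ∀ a : carrier, d (d a) = 0
  leibniz : ∀ {i : ℤ} {a : carrier} (b : carrier), a ∈ grading i →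
    d (a * b) = d a * b + (((-1 : ℤˣ) ^ i : ℤˣ) : ℤ) • (a * d b)
  gcomm : ∀ {i j : ℤ} {a b : carrier}, a ∈ grading i → b ∈ grading j →
    a * b = (((-1 : ℤˣ) ^ (i * j) : ℤˣ) : ℤ) • (b * a)

attribute [instance] DGAlgebra.ring

/-- A DG module over a DG algebra. -/
structure DGModule (A : DGAlgebra.{u}) : Type (u + 1) where
  carrier : Type u
  [acg : AddCommGroup carrier]
  [mod : Module A.carrier carrier]
  grading : ℤ → AddSubgroup carrier
  isInternal : DirectSum.IsInternal grading
  smul_mem : ∀ {i j : ℤ} {a : A.carrier} {x : carrier},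
    a ∈ A.grading i → x ∈ grading j → a • x ∈ grading (i + j)
  d : carrier →+ carrier
  d_mem : ∀ {i : ℤ} {x : carrier}, x ∈ grading i → d x ∈ grading (i - 1)
  d_d : ∀ x : carrier, d (d x) = 0
  leibniz : ∀ {i : ℤ} {a : A.carrier} (x : carrier), a ∈ A.grading i →
    d (a • x) = A.d a • x + (((-1 : ℤˣ) ^ i : ℤˣ) : ℤ) • (a • d x)

attribute [instance] DGModule.acg DGModule.mod

namespace DGModule

variable {A : DGAlgebra.{u}}

/-- The homology of `M` is nonzero in degree `i`:  there is a homogeneous cycle of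
degree `i` which is not a boundary. -/
def HNonzero (M : DGModule A) (i : ℤ) : Prop :=
  ∃ x ∈ M.grading i, M.d x = 0 ∧ ¬∃ y ∈ M.grading (i + 1), M.d y = x

/-- The set of degrees in which the homology of `M` is nonzero. -/
def hSet (M : DGModule A) : Set ℤ := {i | M.HNonzero i}

/-- Homogeneous cycles of degree `i`. -/
def cycles (M : DGModule A) (i : ℤ) : AddSubgroup M.carrier :=
  M.grading i ⊓ M.d.ker

/-- Boundaries of degree `i` (images of homogeneous elements of degree `i+1`). -/
def boundaries (M : DGModule A) (i : ℤ) : AddSubgroup M.carrier :=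
  (M.grading (i + 1)).map M.d

/-- Degree `i` homology group of a DG module. -/
def Hgrp (M : DGModule A) (i : ℤ) : Type u :=
  M.cycles i ⧸ (M.boundaries i).addSubgroupOf (M.cycles i)

noncomputable instance (M : DGModule A) (i : ℤ) : AddCommGroup (M.Hgrp i) :=
  QuotientAddGroup.Quotient.addCommGroup _

end DGModule

/-- A DG algebra as a DG module over itself. -/
def DGAlgebra.toDGModule (A : DGAlgebra.{u}) : DGModule A where
  carrier := A.carrier
  grading := A.grading
  isInternal := A.isInternal
  smul_mem := fun ha hx => A.mul_mem ha hx
  d := A.d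
  d_mem := A.d_mem
  d_d := A.d_d
  leibniz := fun x ha => A.leibniz x ha

/-- A semibasis of a DG module: a basis of the underlying module consisting of
homogeneous elements. -/
structure Semibasis {A : DGAlgebra.{u}} (M : DGModule A) (ι : Type v) where
  b : Module.Basis ι A.carrier M.carrier
  deg : ι → ℤ
  mem : ∀ i, b i ∈ M.grading (deg i)

/-- A morphism of DG modules. -/
structure DGHom {A : DGAlgebra.{u}} (M N : DGModule A) where
  toFun : M.carrier →ₗ[A.carrier] N.carrier
  map_d : ∀ x, toFun (M.d x) = N.d (toFun x)
  map_grading : ∀ {i : ℤ} {x}, x ∈ M.grading i → toFun x ∈ N.grading i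

/-- A morphism of DG modules is a quasiisomorphism if it induces a bijection on
homology in every degree. -/
def DGHom.IsQuasiIso {A : DGAlgebra.{u}} {M N : DGModule A} (φ : DGHom M N) : Prop :=
  (∀ i : ℤ, ∀ z ∈ N.grading i, N.d z = 0 →
      ∃ x ∈ M.grading i, M.d x = 0 ∧ ∃ w ∈ N.grading (i + 1), N.d w = φ.toFun x - z) ∧
  (∀ i : ℤ, ∀ x ∈ M.grading i, M.d x = 0 →
      (∃ w ∈ N.grading (i + 1), N.d w = φ.toFun x) → ∃ y ∈ M.grading (i + 1), M.d y = x)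

/-- Witness that `T` is the tensor product `L ⊗_A Y`, where `L` is semifree with
semibasis `S`.  (For semifree `L` this computes the derived tensor product `L ⊗^L_A Y`.) -/
structure SemifreeTensor {A : DGAlgebra.{u}} {ι : Type v} (L Y T : DGModule A)
    (S : Semibasis L ι) where
  pair : L.carrier →+ Y.carrier →+ T.carrier
  pair_smul : ∀ (a : A.carrier) (x : L.carrier) (y : Y.carrier),
    pair (a • x) y = a • pair x y
  pair_grading : ∀ {i j : ℤ} {x : L.carrier} {y : Y.carrier},
    x ∈ L.grading i → y ∈ Y.grading j → pair x y ∈ T.grading (i + j)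
  pair_leibniz : ∀ {i : ℤ} {x : L.carrier} (y : Y.carrier), x ∈ L.grading i →
    T.d (pair x y) = pair (L.d x) y + (((-1 : ℤˣ) ^ i : ℤˣ) : ℤ) • pair x (Y.d y)
  bij : Function.Bijective fun f : ι →₀ Y.carrier => f.sum fun i y => pair (S.b i) y

/-- Data computing all the iterated derived tensor products of a family
`K : Fin n → DGModule A`:  semifree resolutions `F j` of the `K j`, and for each
subset `I ⊆ Fin n` a DG module `T I` modeling `⊗^L_{i ∈ I} K i`, computed as the
tensor product of the corresponding semifree resolutions. -/
structure DerivedTensorSystem (A : DGAlgebra.{u}) (n : ℕ) (K : Fin n → DGModule A) where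
  F : Fin n → DGModule A
  idx : Fin n → Type u
  S : ∀ j, Semibasis (F j) (idx j)
  res : ∀ j, DGHom (F j) (K j)
  res_qi : ∀ j, (res j).IsQuasiIso
  T : Finset (Fin n) → DGModule A
  T_empty : T ∅ = A.toDGModule
  step : ∀ (I : Finset (Fin n)) (j : Fin n), j ∉ I →
    SemifreeTensor (F j) (T I) (T (insert j I)) (S j)

/-- The DG version of strong Tor-independence: every sub-tensor-product has
homology of amplitude at most `s`. -/
def DerivedTensorSystem.StronglyTorIndependent {A : DGAlgebra.{u}} {n : ℕ}
    {K : Fin n → DGModule A} (D : DerivedTensorSystem A n K) (s : ℤ) : Prop :=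
  ∀ I : Finset (Fin n), ∀ k₁ ∈ (D.T I).hSet, ∀ k₂ ∈ (D.T I).hSet, k₂ - k₁ ≤ s

/-- The set of elements of `m_A • L`, where `m_A = A_+`. -/
def mAL {A : DGAlgebra.{u}} (L : DGModule A) : AddSubgroup L.carrier :=
  AddSubgroup.closure {z : L.carrier | ∃ (i : ℤ) (a : A.carrier) (x : L.carrier),
    0 < i ∧ a ∈ A.grading i ∧ z = a • x}

/-- The data of the DG syzygy construction `Syz_r(K)`:  a minimal semifree resolution
`Fres ≃ K`, the soft truncation `Kt = τ_{≤ r}(Fres) ≃ K`, the semifree submodule `L`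
spanned by the semibasis elements of degrees `≤ r`, and the short exact sequence
`0 → syz → L → Kt → 0` with `syz ⊆ m_A L` and `syz` trivial in degrees `< r`. -/
structure SyzygyData (A : DGAlgebra.{u}) (K : DGModule A) (r : ℤ) where
  syz : DGModule A
  L : DGModule A
  Kt : DGModule A
  Fres : DGModule A
  toK : DGHom Fres K
  toK_qi : toK.IsQuasiIso
  toKt : DGHom Fres Kt
  toKt_qi : toKt.IsQuasiIso
  idx : Type u
  idx_finite : Finite idx
  S : Semibasis L idx
  deg_le : ∀ e, S.deg e ≤ r
  α : DGHom syz L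
  α_inj : Function.Injective α.toFun
  π : DGHom L Kt
  π_surj : Function.Surjective π.toFun
  exact : ∀ x, π.toFun x = 0 ↔ ∃ y, α.toFun y = x
  trunc : ∀ i : ℤ, r < i → Kt.grading i = ⊥
  below : ∀ i : ℤ, i < r → syz.grading i = ⊥
  in_mL : ∀ y, α.toFun y ∈ mAL L

section ComponentAux

open DirectSum

variable {γ : Type u} [AddCommGroup γ] (g : ℤ → AddSubgroup γ) [DirectSum.Decomposition g]

/-- The degree-`k` homogeneous component map. -/
noncomputable def cpHom (k : ℤ) : γ →+ γ :=
  AddMonoidHom.mk' (fun x => (DirectSum.decompose g x k : γ)) (by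
    intro a b
    show ((DirectSum.decompose g (a + b) k : γ)) = _
    rw [DirectSum.decompose_add, DirectSum.add_apply]
    rfl)

lemma cpHom_apply (k : ℤ) (x : γ) : cpHom g k x = (DirectSum.decompose g x k : γ) := rfl

lemma cpHom_mem (k : ℤ) (x : γ) : cpHom g k x ∈ g k := (DirectSum.decompose g x k).2

lemma cpHom_of_mem_same {k : ℤ} {x : γ} (hx : x ∈ g k) : cpHom g k x = x :=
  DirectSum.decompose_of_mem_same g hx

lemma cpHom_of_mem_ne {k k' : ℤ} {x : γ} (hx : x ∈ g k) (h : k ≠ k') : cpHom g k' x = 0 :=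
  DirectSum.decompose_of_mem_ne g hx h

lemma mem_of_cp_ne_zero {x : γ} {j : ℤ} (h : ∀ j', j' ≠ j → cpHom g j' x = 0) : x ∈ g j := by
  classical
  have hsum := DirectSum.sum_support_decompose g x
  have : x = ∑ i ∈ (DirectSum.decompose g x).support, cpHom g i x := hsum.symm
  rw [this]
  refine AddSubgroup.sum_mem _ fun i hi => ?_
  by_cases hij : i = j
  · subst hij; exact cpHom_mem g i x
  · rw [h i hij]; exact (g j).zero_mem

end ComponentAux

section SemibasisAux

variable {A : DGAlgebra.{u}} {L : DGModule A} {ι : Type v} (S : Semibasis L ι)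
variable [DirectSum.Decomposition A.grading] [DirectSum.Decomposition L.grading]

lemma cp_smul_basis (k' : ℤ) (a : A.carrier) (i : ι) :
    cpHom L.grading k' (a • S.b i) = cpHom A.grading (k' - S.deg i) a • S.b i := by
  refine DirectSum.Decomposition.inductionOn A.grading
    (motive := fun a => cpHom L.grading k' (a • S.b i) = cpHom A.grading (k' - S.deg i) a • S.b i)
    ?_ ?_ ?_ a
  · simp
  · intro t m
    have h1 : (m : A.carrier) • S.b i ∈ L.grading (t + S.deg i) := L.smul_mem m.2 (S.mem i)
    by_cases hk : k' = t + S.deg i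
    · subst hk
      rw [cpHom_of_mem_same _ h1, show t + S.deg i - S.deg i = t by ring,
        cpHom_of_mem_same _ m.2]
    · rw [cpHom_of_mem_ne L.grading h1 (by omega),
        cpHom_of_mem_ne A.grading m.2 (by omega), zero_smul]
  · intro a b ha hb
    rw [add_smul, map_add, map_add, ha, hb, add_smul]

lemma cp_eq_sum (k' : ℤ) (x : L.carrier) :
    cpHom L.grading k' x =
      (S.b.repr x).sum fun i a => cpHom A.grading (k' - S.deg i) a • S.b i := by
  conv_lhs => rw [← S.b.linearCombination_repr x, Finsupp.linearCombination_apply]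
  rw [map_finsuppSum]
  exact Finsupp.sum_congr fun i _ => cp_smul_basis S k' _ i

lemma repr_mem {k : ℤ} {x : L.carrier} (hx : x ∈ L.grading k) (i : ι) :
    S.b.repr x i ∈ A.grading (k - S.deg i) := by
  classical
  refine mem_of_cp_ne_zero A.grading fun j hj => ?_
  set f := S.b.repr x with hf
  have hFsupp : ∀ i', (fun i' => cpHom A.grading (j + S.deg i - S.deg i') (f i')) i' ≠ 0 →
      i' ∈ f.support := fun i' hne => Finsupp.mem_support_iff.mpr fun h0 => hne (by simp [h0])
  set g : ι →₀ A.carrier := Finsupp.onFinset f.support _ hFsupp with hg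
  have h0 : cpHom L.grading (j + S.deg i) x = 0 := cpHom_of_mem_ne L.grading hx (by omega)
  rw [cp_eq_sum S] at h0
  have h1 : (f.sum fun i' a' => cpHom A.grading (j + S.deg i - S.deg i') a' • S.b i')
      = Finsupp.linearCombination A.carrier S.b g := by
    rw [Finsupp.linearCombination_apply, Finsupp.sum, Finsupp.sum]
    have e : ∀ i' ∈ f.support,
        cpHom A.grading (j + S.deg i - S.deg i') (f i') • S.b i' = g i' • S.b i' :=
      fun i' _ => rfl
    rw [Finset.sum_congr rfl e]
    exact (Finset.sum_subset Finsupp.support_onFinset_subset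
      (fun i' _ hni' => by rw [Finsupp.notMem_support_iff.mp hni', zero_smul])).symm
  have h2 : g = 0 := by
    have hcomb : Finsupp.linearCombination A.carrier S.b g = 0 := by
      rw [← h1]
      rw [← hf] at h0
      exact h0
    have h2' := S.b.repr_linearCombination g
    rw [hcomb, map_zero] at h2'
    exact h2'.symm
  have h3 : cpHom A.grading (j + S.deg i - S.deg i) (f i) = 0 := by
    have := congrFun (congrArg DFunLike.coe h2) i
    rw [hg, Finsupp.onFinset_apply] at this
    simpa using this
  rw [show j + S.deg i - S.deg i = j by omega] at h3
  exact h3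

lemma grading_zero_of_lt {n : ℤ} (hb : ∀ i, n ≤ S.deg i) {k : ℤ} (hk : k < n) {x : L.carrier}
    (hx : x ∈ L.grading k) : x = 0 := by
  have h : S.b.repr x = 0 := by
    ext i
    have h1 := repr_mem S hx i
    have h2 : k - S.deg i < 0 := by have := hb i; omega
    rw [A.positive _ h2] at h1
    simpa using h1
  exact (LinearEquiv.map_eq_zero_iff _).mp h

end SemibasisAux

section KeyLemma

variable {A : DGAlgebra.{u}} {L : DGModule A} {ι : Type v} (S : Semibasis L ι)
variable [DirectSum.Decomposition A.grading] [DirectSum.Decomposition L.grading]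

lemma key_induction (n m sa : ℤ) (hdeg : ∀ i, n ≤ S.deg i ∧ S.deg i ≤ n + m)
    (hsa : IsGreatest A.toDGModule.hSet sa) (k : ℤ) (hk : sa + n + m < k) :
    ∀ t : ℕ, ∀ x ∈ L.grading k, L.d x = 0 →
      (∀ i ∈ (S.b.repr x).support, S.deg i < n + t) →
      ∃ y ∈ L.grading (k + 1), L.d y = x := by
  intro t
  induction t with
  | zero =>
    intro x hx hdx hsupp
    have hx0 : x = 0 := by
      have h : S.b.repr x = 0 := Finsupp.support_eq_empty.mp
        (Finset.eq_empty_of_forall_notMem fun i hi => by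
          have h1 := hsupp i hi
          have h2 := (hdeg i).1
          simp only [Nat.cast_zero, add_zero] at h1
          omega)
      exact (LinearEquiv.map_eq_zero_iff _).mp h
    exact ⟨0, (L.grading _).zero_mem, by simp [hx0]⟩
  | succ t ih =>
    intro x hx hdx hsupp
    classical
    set f := S.b.repr x with hf
    set J : Finset ι := f.support.filter (fun i => S.deg i = n + t) with hJ
    have hJsupp : ∀ i ∈ J, i ∈ f.support := fun i hi => (Finset.mem_filter.mp hi).1
    have hJdeg : ∀ i ∈ J, S.deg i = n + t := fun i hi => (Finset.mem_filter.mp hi).2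
    have hmem : ∀ i, f i ∈ A.grading (k - S.deg i) := fun i => repr_mem S hx i
    -- coefficients of d (basis elts) vanish in high degrees
    have hdb : ∀ i ∈ f.support, ∀ i₀ : ι, n + t ≤ S.deg i₀ →
        S.b.repr (L.d (S.b i)) i₀ = 0 := by
      intro i hi i₀ hi₀
      have h1 : L.d (S.b i) ∈ L.grading (S.deg i - 1) := L.d_mem (S.mem i)
      have h2 := repr_mem S h1 i₀
      have h3 : S.deg i - 1 - S.deg i₀ < 0 := by
        have := hsupp i hi; push_cast at this; omega
      rw [A.positive _ h3] at h2
      simpa using h2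
    -- expansion of d x
    have h1 : L.d x = f.sum fun i a =>
        A.d a • S.b i + (((-1 : ℤˣ) ^ (k - S.deg i) : ℤˣ) : ℤ) • (a • L.d (S.b i)) := by
      conv_lhs => rw [← S.b.linearCombination_repr x, Finsupp.linearCombination_apply, ← hf]
      rw [map_finsuppSum]
      exact Finsupp.sum_congr fun i _ => L.leibniz (S.b i) (hmem i)
    have hsum0 : (f.sum fun i a =>
        A.d a • S.b i + (((-1 : ℤˣ) ^ (k - S.deg i) : ℤˣ) : ℤ) • (a • L.d (S.b i))) = 0 := by
      rw [← h1, hdx]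
    -- coefficients at top degree are cycles
    have hcycle : ∀ i₀ ∈ J, A.d (f i₀) = 0 := by
      intro i₀ hi₀
      have h2 : (∑ i ∈ f.support, (S.b.repr
          (A.d (f i) • S.b i + (((-1 : ℤˣ) ^ (k - S.deg i) : ℤˣ) : ℤ) • (f i • L.d (S.b i)))) i₀)
          = 0 := by
        rw [Finsupp.sum] at hsum0
        rw [← Finsupp.finset_sum_apply, ← map_sum, hsum0, map_zero, Finsupp.zero_apply]
      have h3 : ∀ i ∈ f.support, (S.b.repr
          (A.d (f i) • S.b i + (((-1 : ℤˣ) ^ (k - S.deg i) : ℤˣ) : ℤ) • (f i • L.d (S.b i)))) i₀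
          = if i = i₀ then A.d (f i) else 0 := by
        intro i hi
        rw [map_add, Finsupp.add_apply, map_smul, Module.Basis.repr_self, map_zsmul, map_smul,
          Finsupp.smul_apply, Finsupp.single_apply, Finsupp.smul_apply, Finsupp.smul_apply,
          hdb i hi i₀ (le_of_eq (hJdeg i₀ hi₀).symm), smul_zero, smul_zero, add_zero,
          smul_eq_mul, mul_ite, mul_one, mul_zero]
      rw [Finset.sum_congr rfl h3, Finset.sum_ite_eq' f.support i₀ (fun i => A.d (f i))] at h2
      rw [if_pos (hJsupp i₀ hi₀)] at h2
      exact h2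
    -- choose antiderivatives of the top coefficients
    have hex : ∀ i : ι, ∃ c : A.carrier,
        c ∈ A.grading (k - S.deg i + 1) ∧ (i ∈ J → A.d c = f i) := by
      intro i
      by_cases hi : i ∈ J
      · have hdeg_i := hJdeg i hi
        have hgt : sa < k - S.deg i := by
          have := (hdeg i).2; omega
        have hnot : k - S.deg i ∉ A.toDGModule.hSet := fun hmem' => by
          have := hsa.2 hmem'; omega
        simp only [DGModule.hSet, Set.mem_setOf_eq, DGModule.HNonzero] at hnot
        push_neg at hnot
        obtain ⟨c, hc1, hc2⟩ := hnot (f i) (hmem i) (hcycle i hi)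
        exact ⟨c, hc1, fun _ => hc2⟩
      · exact ⟨0, (A.grading _).zero_mem, fun h => absurd h hi⟩
    choose c hc hdc using hex
    set z : L.carrier := ∑ i ∈ J, c i • S.b i with hz
    have hzmem : z ∈ L.grading (k + 1) := by
      refine AddSubgroup.sum_mem _ fun i hi => ?_
      have h4 := L.smul_mem (hc i) (S.mem i)
      rwa [show k - S.deg i + 1 + S.deg i = k + 1 by ring] at h4
    have hdz : L.d z = ∑ i ∈ J, (A.d (c i) • S.b i +
        (((-1 : ℤˣ) ^ (k - S.deg i + 1) : ℤˣ) : ℤ) • (c i • L.d (S.b i))) := by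
      rw [hz, map_sum]
      exact Finset.sum_congr rfl fun i _ => L.leibniz (S.b i) (hc i)
    -- coefficients of d z in high degrees
    have hdzrepr : ∀ i₀ : ι, n + t ≤ S.deg i₀ →
        S.b.repr (L.d z) i₀ = if i₀ ∈ J then f i₀ else 0 := by
      intro i₀ hi₀
      rw [hdz, map_sum, Finsupp.finset_sum_apply]
      have h3 : ∀ i ∈ J, (S.b.repr (A.d (c i) • S.b i +
          (((-1 : ℤˣ) ^ (k - S.deg i + 1) : ℤˣ) : ℤ) • (c i • L.d (S.b i)))) i₀
          = if i = i₀ then f i else 0 := by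
        intro i hi
        rw [map_add, Finsupp.add_apply, map_smul, Module.Basis.repr_self, map_zsmul, map_smul,
          Finsupp.smul_apply, Finsupp.single_apply, Finsupp.smul_apply, Finsupp.smul_apply,
          hdb i (hJsupp i hi) i₀ hi₀, smul_zero, smul_zero, add_zero,
          smul_eq_mul, mul_ite, mul_one, mul_zero, hdc i hi]
      rw [Finset.sum_congr rfl h3, Finset.sum_ite_eq' J i₀ (fun i => f i)]
    set x' : L.carrier := x - L.d z with hx'def
    have hx'mem : x' ∈ L.grading k := by
      have h4 := L.d_mem hzmem
      rw [show k + 1 - 1 = k by ring] at h4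
      exact sub_mem hx h4
    have hdx' : L.d x' = 0 := by
      rw [hx'def, map_sub, hdx, L.d_d, sub_zero]
    have hsupp' : ∀ i₀ ∈ (S.b.repr x').support, S.deg i₀ < n + t := by
      intro i₀ hi₀mem
      by_contra hge
      push_neg at hge
      have h5 : S.b.repr x' i₀ = 0 := by
        rw [hx'def, map_sub, Finsupp.sub_apply, hdzrepr i₀ hge, ← hf]
        by_cases hi₀ : i₀ ∈ J
        · rw [if_pos hi₀, sub_self]
        · rw [if_neg hi₀, sub_zero]
          by_contra hne
          have h6 : i₀ ∈ f.support := Finsupp.mem_support_iff.mpr hne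
          have h7 := hsupp i₀ h6
          push_cast at h7
          have h8 : S.deg i₀ = n + t := by omega
          exact hi₀ (Finset.mem_filter.mpr ⟨h6, h8⟩)
      exact Finsupp.mem_support_iff.mp hi₀mem h5
    obtain ⟨y', hy'mem, hy'd⟩ := ih x' hx'mem hdx' hsupp'
    refine ⟨y' + z, (L.grading _).add_mem hy'mem hzmem, ?_⟩
    rw [map_add, hy'd, hx'def]
    abel

end KeyLemma

/-- If `A` is a positively graded DG algebra with `amp H(A) = s`,
`A ≄ 0`, and `L` is a nonzero semifree DG `A`-module with semibasis concentrated in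
degrees `n, n+1, …, n+m` with `m ≥ 0`, then `inf H(L) ≥ n` and `sup H(L) ≤ s + n + m`,
hence `amp H(L) ≤ s + m`. -/
theorem stmt2 (A : DGAlgebra.{u}) (L : DGModule A) (ι : Type u) (S : Semibasis L ι)
    (n m : ℤ) (hm : 0 ≤ m) (hdeg : ∀ i, n ≤ S.deg i ∧ S.deg i ≤ n + m)
    (sa ia s : ℤ)
    (hsa : IsGreatest A.toDGModule.hSet sa)
    (hia : IsLeast A.toDGModule.hSet ia)
    (hs : s = sa - ia)
    (hL : ∃ x : L.carrier, x ≠ 0) :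
    (∀ k ∈ L.hSet, n ≤ k ∧ k ≤ s + n + m) ∧
      (∀ k₁ ∈ L.hSet, ∀ k₂ ∈ L.hSet, k₂ - k₁ ≤ s + m) := by
  letI : DirectSum.Decomposition A.grading := A.isInternal.chooseDecomposition
  letI : DirectSum.Decomposition L.grading := L.isInternal.chooseDecomposition
  -- the differential kills 1
  have hd1 : A.d 1 = 0 := by
    have h := A.leibniz (1 : A.carrier) A.one_mem
    simp only [one_mul, mul_one, zpow_zero, Units.val_one, one_smul] at h
    exact (left_eq_add.mp h)
  -- homology of A is nonzero in degree 0
  have h0 : (0 : ℤ) ∈ A.toDGModule.hSet := by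
    refine ⟨(1 : A.carrier), A.one_mem, hd1, ?_⟩
    rintro ⟨y, hy, hdy⟩
    obtain ⟨w, hw, hdw, hnb⟩ := hsa.1
    have y' : A.carrier := y
    let yc : A.carrier := y
    let wc : A.carrier := w
    have hyc : yc ∈ A.grading (0 + 1) := hy
    have hwc : wc ∈ A.grading sa := hw
    have hdyc : A.d yc = 1 := hdy
    have hdwc : A.d wc = 0 := hdw
    refine hnb ⟨yc * wc, ?_, ?_⟩
    · have h1 := A.mul_mem hyc hwc
      rwa [show (0 : ℤ) + 1 + sa = sa + 1 by ring] at h1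
    · have h2 := A.leibniz wc hyc
      rw [hdyc, hdwc, one_mul, mul_zero, smul_zero, add_zero] at h2
      exact h2
  have hia0 : ia ≤ 0 := hia.2 h0
  -- lower bound
  have hlow : ∀ k ∈ L.hSet, n ≤ k := by
    intro k hk
    by_contra hn
    push_neg at hn
    obtain ⟨x, hx, hdx, hnb⟩ := hk
    exact hnb ⟨0, (L.grading _).zero_mem,
      by rw [map_zero, grading_zero_of_lt S (fun i => (hdeg i).1) hn hx]⟩
  -- upper bound
  have hhigh : ∀ k ∈ L.hSet, k ≤ sa + n + m := by
    intro k hk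
    by_contra hgt
    push_neg at hgt
    obtain ⟨x, hx, hdx, hnb⟩ := hk
    refine hnb ?_
    have hcast : ((m + 1).toNat : ℤ) = m + 1 := Int.toNat_of_nonneg (by omega)
    obtain ⟨y, h1, h2⟩ := key_induction S n m sa hdeg hsa k hgt (m + 1).toNat x hx hdx
      (fun i _ => by have := (hdeg i).2; omega)
    exact ⟨y, h1, h2⟩
  constructor
  · intro k hk
    refine ⟨hlow k hk, ?_⟩
    have := hhigh k hk
    omega
  · intro k₁ h1 k₂ h2
    have := hlow k₁ h1
    have := hhigh k₂ h2
    omega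
end

section
/- Let (A, m_A) be a local homologically bounded DG algebra with amp(H(A)) = s, A not quasi-isomorphic to zero and m_A = A_+ (so A_0 is a field). Let K be a homologically finite DG A-module with amp(H(K)) ≤ s, let r ≥ sup(H(K)), and let K' = Syz_r(K) be the r-th DG syzygy of K. Then sup(H(K')) ≤ s + r, inf(H(K')) ≥ r, and therefore amp(H(K')) ≤ s. -/
universe u v

set_option synthInstance.maxHeartbeats 1000000
set_option maxHeartbeats 1000000

namespace Stmt6Aux

open DirectSum
open scoped Classical

variable {A : DGAlgebra.{u}}

/-- The grading decomposition as an additive equivalence. -/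
noncomputable def dec (M : DGModule A) : M.carrier ≃+ ⨁ i, M.grading i :=
  (AddEquiv.ofBijective (DirectSum.coeAddMonoidHom M.grading) M.isInternal).symm

lemma dec_symm_apply (M : DGModule A) (y : ⨁ i, M.grading i) :
    (dec M).symm y = DirectSum.coeAddMonoidHom M.grading y := by
  simp [dec]
  rfl

/-- Projection onto the degree `k` component. -/
noncomputable def proj (M : DGModule A) (k : ℤ) : M.carrier →+ M.carrier :=
  AddMonoidHom.mk' (fun x => (dec M x k : M.carrier)) (by
    intro x y; simp [map_add])

lemma proj_apply (M : DGModule A) (k : ℤ) (x : M.carrier) :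
    proj M k x = (dec M x k : M.carrier) := rfl

lemma proj_mem (M : DGModule A) (k : ℤ) (x : M.carrier) :
    proj M k x ∈ M.grading k := (dec M x k).2

lemma dec_of_mem {M : DGModule A} {j : ℤ} {x : M.carrier} (hx : x ∈ M.grading j) :
    dec M x = DirectSum.of (fun i => M.grading i) j ⟨x, hx⟩ := by
  have h : (dec M).symm (DirectSum.of (fun i => M.grading i) j ⟨x, hx⟩) = x := by
    rw [dec_symm_apply, DirectSum.coeAddMonoidHom_of]
  exact (((dec M).symm_apply_eq).mp h).symm

lemma proj_of_mem {M : DGModule A} {j : ℤ} {x : M.carrier} (hx : x ∈ M.grading j) (k : ℤ) :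
    proj M k x = if k = j then x else 0 := by
  rw [proj_apply, dec_of_mem hx]
  by_cases h : k = j
  · subst h; rw [if_pos rfl, DirectSum.of_eq_same]
  · rw [if_neg h, DirectSum.of_eq_of_ne _ _ _ h]; rfl

lemma sum_proj (M : DGModule A) (x : M.carrier) :
    ∑ k ∈ (dec M x).support, proj M k x = x := by
  have h1 : (dec M).symm (dec M x) = x := AddEquiv.symm_apply_apply _ _
  conv_rhs => rw [← h1]
  conv_rhs => rw [← DirectSum.sum_support_of (dec M x)]
  rw [map_sum]
  refine Finset.sum_congr rfl fun k _ => ?_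
  rw [dec_symm_apply, DirectSum.coeAddMonoidHom_of, proj_apply]

lemma proj_eq_zero {M : DGModule A} {k : ℤ} {x : M.carrier}
    (h : k ∉ (dec M x).support) : proj M k x = 0 := by
  rw [proj_apply, DFinsupp.notMem_support_iff.mp h]; rfl


/-- Projection for the algebra itself, typed over `A.carrier`. -/
noncomputable def projA (A : DGAlgebra.{u}) (k : ℤ) : A.carrier →+ A.carrier :=
  proj A.toDGModule k

lemma projA_mem (A : DGAlgebra.{u}) (k : ℤ) (a : A.carrier) : projA A k a ∈ A.grading k :=
  proj_mem A.toDGModule k a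

lemma projA_of_mem {A : DGAlgebra.{u}} {j : ℤ} {a : A.carrier} (ha : a ∈ A.grading j) (k : ℤ) :
    projA A k a = if k = j then a else 0 :=
  proj_of_mem (M := A.toDGModule) ha k

lemma sum_projA (A : DGAlgebra.{u}) (a : A.carrier) :
    ∑ k ∈ (dec A.toDGModule a).support, projA A k a = a :=
  sum_proj A.toDGModule a

lemma projA_eq_zero {A : DGAlgebra.{u}} {k : ℤ} {a : A.carrier}
    (h : k ∉ (dec A.toDGModule a).support) : projA A k a = 0 :=
  proj_eq_zero h

end Stmt6Aux

namespace Stmt6Aux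

open scoped Classical

variable {A : DGAlgebra.{u}} {M : DGModule A} {ι : Type v} [Fintype ι]

lemma repr_smul_basis (S : Semibasis M ι) (a : A.carrier) (e f : ι) :
    S.b.repr (a • S.b e) f = if e = f then a else 0 := by
  rw [map_smul, Module.Basis.repr_self, Finsupp.smul_apply, Finsupp.single_apply]
  split <;> simp [smul_eq_mul]

lemma repr_sum_smul (S : Semibasis M ι) (a : ι → A.carrier) (f : ι) :
    S.b.repr (∑ e, a e • S.b e) f = a f := by
  rw [map_sum, Finsupp.finset_sum_apply]
  rw [Finset.sum_congr rfl (fun e _ => repr_smul_basis S (a e) e f)]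
  simp

lemma mem_grading_of_repr (S : Semibasis M ι) (z : M.carrier) (j : ℤ)
    (h : ∀ e, S.b.repr z e ∈ A.grading (j - S.deg e)) : z ∈ M.grading j := by
  rw [← S.b.sum_repr z]
  refine sum_mem fun e _ => ?_
  have := M.smul_mem (h e) (S.mem e)
  rwa [show j - S.deg e + S.deg e = j by ring] at this

lemma repr_mem_grading (S : Semibasis M ι) (z : M.carrier) (j : ℤ)
    (hz : z ∈ M.grading j) (e : ι) :
    S.b.repr z e ∈ A.grading (j - S.deg e) := by
  set c : ι → A.carrier := fun f => S.b.repr z f with hcdef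
  set Zk : ℤ → M.carrier := fun k => ∑ f, projA A (k - S.deg f) (c f) • S.b f with hZkdef
  have hZk_mem : ∀ k, Zk k ∈ M.grading k := by
    intro k
    refine sum_mem fun f _ => ?_
    have := M.smul_mem (projA_mem A (k - S.deg f) (c f)) (S.mem f)
    rwa [show k - S.deg f + S.deg f = k by ring] at this
  set J : Finset ℤ :=
    Finset.univ.biUnion (fun f : ι => (dec A.toDGModule (c f)).support.image (· + S.deg f))
    with hJdef
  have hJ : ∀ f : ι, ∀ i ∈ (dec A.toDGModule (c f)).support, i + S.deg f ∈ J := by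
    intro f i hi
    rw [hJdef]
    exact Finset.mem_biUnion.mpr ⟨f, Finset.mem_univ f, Finset.mem_image_of_mem _ hi⟩
  have hrepr_Zk : ∀ k f, S.b.repr (Zk k) f = projA A (k - S.deg f) (c f) :=
    fun k f => repr_sum_smul S _ f
  have hsum : ∑ k ∈ J, Zk k = z := by
    rw [hZkdef]
    rw [Finset.sum_comm]
    have : ∀ f : ι, ∑ k ∈ J, projA A (k - S.deg f) (c f) • S.b f
        = (∑ k ∈ J, projA A (k - S.deg f) (c f)) • S.b f := by
      intro f; rw [Finset.sum_smul]
    rw [Finset.sum_congr rfl fun f _ => this f]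
    have h2 : ∀ f : ι, (∑ k ∈ J, projA A (k - S.deg f) (c f)) = c f := by
      intro f
      have hinj : ∀ x ∈ J, ∀ y ∈ J, x - S.deg f = y - S.deg f → x = y := by
        intro x _ y _ h; omega
      rw [← Finset.sum_image (g := (· - S.deg f)) (f := fun i => projA A i (c f)) hinj]
      have hsub : (dec A.toDGModule (c f)).support ⊆ J.image (· - S.deg f) := by
        intro i hi
        exact Finset.mem_image.mpr ⟨i + S.deg f, hJ f i hi, by ring⟩
      rw [← Finset.sum_subset hsub (fun i _ hi => projA_eq_zero hi)]
      exact sum_projA A (c f)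
    rw [Finset.sum_congr rfl fun f _ => by rw [h2 f]]
    exact S.b.sum_repr z
  have hZk0 : ∀ k, k ≠ j → Zk k = 0 := by
    intro k hk
    by_cases hkJ : k ∈ J
    · have h1 := congrArg (fun t => proj M k t) hsum
      simp only [map_sum] at h1
      rw [Finset.sum_congr rfl (fun k' _ => proj_of_mem (hZk_mem k') k)] at h1
      rw [Finset.sum_ite_eq J k Zk, if_pos hkJ] at h1
      rw [h1, proj_of_mem hz, if_neg hk]
    · refine Finset.sum_eq_zero fun f _ => ?_
      have hns : (k - S.deg f) ∉ (dec A.toDGModule (c f)).support := by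
        intro h
        have := hJ f _ h
        rw [show k - S.deg f + S.deg f = k by ring] at this
        exact hkJ this
      rw [projA_eq_zero hns, zero_smul]
  have hce : c e = ∑ i ∈ (dec A.toDGModule (c e)).support, projA A i (c e) :=
    (sum_projA A (c e)).symm
  rw [show S.b.repr z e = c e from rfl, hce]
  refine sum_mem fun i _ => ?_
  by_cases hij : i = j - S.deg e
  · rw [hij]; exact projA_mem A _ _
  · have hk : (i + S.deg e) ≠ j := by omega
    have h0 := hZk0 (i + S.deg e) hk
    have h1 := congrArg (fun t => S.b.repr t e) h0
    simp only [hrepr_Zk, map_zero, Finsupp.zero_apply] at h1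
    rw [show i + S.deg e - S.deg e = i by ring] at h1
    rw [h1]
    exact zero_mem _
end Stmt6Aux

namespace Stmt6Aux

open scoped Classical

variable {A : DGAlgebra.{u}}

lemma mem_grading_of_image {M N : DGModule A} (φ : DGHom M N)
    (hinj : Function.Injective φ.toFun) (v : M.carrier) (j : ℤ)
    (h : φ.toFun v ∈ N.grading j) : v ∈ M.grading j := by
  have hv : v = ∑ i ∈ (dec M v).support, proj M i v := (sum_proj M v).symm
  rw [hv]
  refine sum_mem fun i hi => ?_
  by_cases hij : i = j
  · rw [hij]
    have := proj_mem M i v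
    rwa [hij] at this
  · suffices hz : proj M i v = 0 by rw [hz]; exact zero_mem _
    have h1 : φ.toFun v = ∑ i' ∈ (dec M v).support, φ.toFun (proj M i' v) := by
      conv_lhs => rw [hv]
      rw [map_sum]
    have h2 := congrArg (fun t => proj N i t) h1
    simp only [map_sum] at h2
    rw [proj_of_mem h, if_neg hij] at h2
    rw [Finset.sum_congr rfl
      (fun i' _ => proj_of_mem (φ.map_grading (proj_mem M i' v)) i)] at h2
    rw [Finset.sum_ite_eq ((dec M v).support) i (fun i' => φ.toFun (proj M i' v)),
      if_pos hi] at h2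
    exact hinj (by rw [← h2, map_zero])

lemma repr_d_basis {M : DGModule A} {ι : Type v} [Fintype ι] (S : Semibasis M ι)
    {e f : ι} (hef : S.deg e ≤ S.deg f) : S.b.repr (M.d (S.b e)) f = 0 := by
  have h1 : M.d (S.b e) ∈ M.grading (S.deg e - 1) := M.d_mem (S.mem e)
  have h2 := repr_mem_grading S _ _ h1 f
  rw [A.positive _ (by omega)] at h2
  simpa using h2

lemma acyclic_above (sa : ℤ)
    (hA : ∀ i : ℤ, sa < i → ∀ a ∈ A.grading i, A.d a = 0 →
      ∃ y ∈ A.grading (i + 1), A.d y = a)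
    {M : DGModule A} {ι : Type v} [Fintype ι] (S : Semibasis M ι)
    (r : ℤ) (hdeg : ∀ e, S.deg e ≤ r)
    (j : ℤ) (hj : sa + r < j) :
    ∀ z ∈ M.grading j, M.d z = 0 → ∃ w ∈ M.grading (j + 1), M.d w = z := by
  set N : ℕ := Fintype.card ι + 2 with hN
  set cnt : ι → ℕ := fun e => (Finset.univ.filter fun e' => S.deg e' < S.deg e).card
    with hcnt
  set μ : M.carrier → ℕ := fun z => ∑ e ∈ (S.b.repr z).support, N ^ cnt e with hμ
  suffices H : ∀ n : ℕ, ∀ z ∈ M.grading j, M.d z = 0 → μ z ≤ n →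
      ∃ w ∈ M.grading (j + 1), M.d w = z by
    intro z hz hdz; exact H (μ z) z hz hdz le_rfl
  intro n
  induction n with
  | zero =>
    intro z _ _ hμz
    have hsupp : (S.b.repr z).support = ∅ := by
      by_contra hne
      obtain ⟨e, he⟩ := Finset.nonempty_iff_ne_empty.mpr hne
      have h1 : 0 < N ^ cnt e := pow_pos (by omega) _
      have h2 : N ^ cnt e ≤ μ z := by
        rw [hμ]
        exact Finset.single_le_sum (f := fun e => N ^ cnt e) (fun _ _ => Nat.zero_le _) he
      omega
    have hz0 : z = 0 := by
      have : S.b.repr z = 0 := Finsupp.support_eq_empty.mp hsupp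
      exact (LinearEquiv.map_eq_zero_iff S.b.repr).mp this
    exact ⟨0, zero_mem _, by rw [map_zero, hz0]⟩
  | succ n IH =>
    intro z hz hdz hμz
    by_cases hz0 : z = 0
    · exact ⟨0, zero_mem _, by rw [map_zero, hz0]⟩
    have hne : (S.b.repr z).support.Nonempty := by
      rw [Finsupp.support_nonempty_iff]
      exact fun h => hz0 ((LinearEquiv.map_eq_zero_iff S.b.repr).mp h)
    obtain ⟨e₀, he₀s, he₀max⟩ := Finset.exists_max_image (S.b.repr z).support S.deg hne
    set c : ι → A.carrier := fun f => S.b.repr z f with hcdef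
    have hc : ∀ f, c f ∈ A.grading (j - S.deg f) := fun f => repr_mem_grading S z j hz f
    -- the differential of z, expanded
    have hdzsum : M.d z = (∑ e, (A.d (c e)) • S.b e) +
        ∑ e, (((-1 : ℤˣ) ^ (j - S.deg e) : ℤˣ) : ℤ) • (c e • M.d (S.b e)) := by
      conv_lhs => rw [← S.b.sum_repr z]
      rw [map_sum, ← Finset.sum_add_distrib]
      exact Finset.sum_congr rfl fun e _ => M.leibniz (S.b e) (hc e)
    have hdc : A.d (c e₀) = 0 := by
      have h := congrArg (fun t => S.b.repr t e₀) hdzsum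
      rw [hdz] at h
      simp only [map_zero, Finsupp.zero_apply, map_add, Finsupp.add_apply] at h
      rw [repr_sum_smul S (fun e => A.d (c e)) e₀] at h
      rw [map_sum, Finsupp.finset_sum_apply] at h
      have hzero : ∀ e : ι, (S.b.repr ((((-1 : ℤˣ) ^ (j - S.deg e) : ℤˣ) : ℤ) •
          (c e • M.d (S.b e)))) e₀ = 0 := by
        intro e
        rw [map_zsmul, map_smul, Finsupp.smul_apply, Finsupp.smul_apply]
        by_cases hes : e ∈ (S.b.repr z).support
        · rw [repr_d_basis S (he₀max e hes), smul_zero, smul_zero]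
        · have : c e = 0 := Finsupp.notMem_support_iff.mp hes
          rw [this, zero_smul, smul_zero]
      rw [Finset.sum_congr rfl fun e _ => hzero e] at h
      simp at h
      exact h.symm
    -- kill the top coefficient
    have htop : sa < j - S.deg e₀ := by have := hdeg e₀; omega
    obtain ⟨aa, haa, hdaa⟩ := hA _ htop _ (hc e₀) hdc
    set u : M.carrier := aa • S.b e₀ with hu
    have hu_mem : u ∈ M.grading (j + 1) := by
      have := M.smul_mem haa (S.mem e₀)
      rwa [show j - S.deg e₀ + 1 + S.deg e₀ = j + 1 by ring] at this
    have hdu : M.d u = c e₀ • S.b e₀ +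
        (((-1 : ℤˣ) ^ (j - S.deg e₀ + 1) : ℤˣ) : ℤ) • (aa • M.d (S.b e₀)) := by
      rw [hu, M.leibniz (S.b e₀) haa, hdaa]
    set z' : M.carrier := z - M.d u with hz'def
    have hz' : z' ∈ M.grading j := by
      refine sub_mem hz ?_
      have := M.d_mem hu_mem
      rwa [show j + 1 - 1 = j by ring] at this
    have hdz' : M.d z' = 0 := by
      rw [hz'def, map_sub, hdz, M.d_d, sub_zero]
    have hrepr_du : ∀ f, S.b.repr (M.d u) f = (if e₀ = f then c e₀ else 0) +
        (((-1 : ℤˣ) ^ (j - S.deg e₀ + 1) : ℤˣ) : ℤ) • (aa • S.b.repr (M.d (S.b e₀)) f) := by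
      intro f
      rw [hdu, map_add, Finsupp.add_apply, repr_smul_basis S (c e₀) e₀ f,
        map_zsmul, map_smul, Finsupp.smul_apply, Finsupp.smul_apply]
    have hz'e₀ : S.b.repr z' e₀ = 0 := by
      rw [hz'def, map_sub, Finsupp.sub_apply, hrepr_du e₀, if_pos rfl,
        repr_d_basis S (le_refl (S.deg e₀))]
      simp
      exact sub_self _
    have hz'f : ∀ f, f ≠ e₀ → S.deg e₀ ≤ S.deg f → S.b.repr z' f = c f := by
      intro f hfe hdf
      rw [hz'def, map_sub, Finsupp.sub_apply, hrepr_du f, if_neg (Ne.symm hfe),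
        repr_d_basis S hdf]
      simp
      rfl
    set lowset : Finset ι := Finset.univ.filter (fun f => S.deg f < S.deg e₀) with hlow
    have hsupp : (S.b.repr z').support ⊆ ((S.b.repr z).support.erase e₀) ∪ lowset := by
      intro f hf
      have hf0 : S.b.repr z' f ≠ 0 := Finsupp.mem_support_iff.mp hf
      by_cases hdf : S.deg f < S.deg e₀
      · exact Finset.mem_union_right _ (Finset.mem_filter.mpr ⟨Finset.mem_univ f, hdf⟩)
      · have hfe : f ≠ e₀ := fun h => hf0 (by rw [h]; exact hz'e₀)
        have : S.b.repr z' f = c f := hz'f f hfe (by omega)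
        refine Finset.mem_union_left _ (Finset.mem_erase.mpr ⟨hfe, ?_⟩)
        rw [Finsupp.mem_support_iff]
        rw [this] at hf0
        exact hf0
    have hcntlt : ∀ f, S.deg f < S.deg e₀ → cnt f < cnt e₀ := by
      intro f hf
      apply Finset.card_lt_card
      rw [Finset.ssubset_iff_of_subset]
      · exact ⟨f, Finset.mem_filter.mpr ⟨Finset.mem_univ f, hf⟩,
          fun hmem => absurd (Finset.mem_filter.mp hmem).2 (lt_irrefl _)⟩
      · intro x hx
        have := (Finset.mem_filter.mp hx).2
        exact Finset.mem_filter.mpr ⟨Finset.mem_univ x, by omega⟩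
    -- the measure decreases
    have hμlt : μ z' < μ z := by
      have h1 : μ z' ≤ ∑ e ∈ ((S.b.repr z).support.erase e₀) ∪ lowset, N ^ cnt e :=
        Finset.sum_le_sum_of_subset hsupp
      have h2 : ∑ e ∈ ((S.b.repr z).support.erase e₀) ∪ lowset, N ^ cnt e ≤
          (∑ e ∈ (S.b.repr z).support.erase e₀, N ^ cnt e) + ∑ e ∈ lowset, N ^ cnt e :=
        by
          rw [← Finset.union_sdiff_self_eq_union, Finset.sum_union Finset.disjoint_sdiff]
          exact Nat.add_le_add_left (Finset.sum_le_sum_of_subset Finset.sdiff_subset) _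
      have h3 : ∑ e ∈ lowset, N ^ cnt e < N ^ cnt e₀ := by
        rcases Finset.eq_empty_or_nonempty lowset with hemp | hnemp
        · rw [hemp, Finset.sum_empty]
          exact pow_pos (by omega) _
        · have hc1 : 1 ≤ cnt e₀ := by
            rw [hcnt]
            rw [hlow] at hnemp
            exact Finset.card_pos.mpr hnemp
          have hb : ∀ f ∈ lowset, N ^ cnt f ≤ N ^ (cnt e₀ - 1) := by
            intro f hf
            have := hcntlt f (Finset.mem_filter.mp hf).2
            exact Nat.pow_le_pow_right (by omega) (by omega)
          calc ∑ e ∈ lowset, N ^ cnt e ≤ ∑ _e ∈ lowset, N ^ (cnt e₀ - 1) :=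
                Finset.sum_le_sum hb
            _ = lowset.card * N ^ (cnt e₀ - 1) := by rw [Finset.sum_const, smul_eq_mul]
            _ < N * N ^ (cnt e₀ - 1) := by
                refine (Nat.mul_lt_mul_right (pow_pos (by omega) _)).mpr ?_
                have : lowset.card ≤ Fintype.card ι := Finset.card_le_univ _
                omega
            _ = N ^ cnt e₀ := by
                rw [← pow_succ']
                congr 1
                omega
      have h4 : μ z = N ^ cnt e₀ + ∑ e ∈ (S.b.repr z).support.erase e₀, N ^ cnt e :=
        (Finset.add_sum_erase _ _ he₀s).symm
      omega
    obtain ⟨w', hw', hdw'⟩ := IH z' hz' hdz' (by omega)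
    refine ⟨w' + u, add_mem hw' hu_mem, ?_⟩
    rw [map_add, hdw', hz'def]
    abel

lemma hSetA_iff (A : DGAlgebra.{u}) (i : ℤ) :
    i ∈ A.toDGModule.hSet ↔
      ∃ x ∈ A.grading i, A.d x = 0 ∧ ¬∃ y ∈ A.grading (i + 1), A.d y = x := Iff.rfl

end Stmt6Aux

open Stmt6Aux in

/-- Let `(A, m_A)` be a local homologically bounded DG algebra with
`amp H(A) = s`, `A ≄ 0` and `m_A = A_+` (so `A_0` is a field).  If `K` is homologically
finite with `amp H(K) ≤ s`, `r ≥ sup H(K)`, and `K' = Syz_r(K)`, then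
`sup H(K') ≤ s + r`, `inf H(K') ≥ r`, and therefore `amp H(K') ≤ s`. -/
theorem stmt6 (A : DGAlgebra.{u})
    (hfield : ∀ a ∈ A.grading 0, a ≠ 0 → IsUnit a)
    (sa ia s : ℤ)
    (hsa : IsGreatest A.toDGModule.hSet sa)
    (hia : IsLeast A.toDGModule.hSet ia)
    (hs : s = sa - ia)
    (K : DGModule A)
    (hKbdd : BddAbove K.hSet ∧ BddBelow K.hSet)
    (hKamp : ∀ k₁ ∈ K.hSet, ∀ k₂ ∈ K.hSet, k₂ - k₁ ≤ s)
    (r : ℤ) (hr : ∀ k ∈ K.hSet, k ≤ r)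
    (D : SyzygyData A K r) :
    (∀ k ∈ D.syz.hSet, k ≤ s + r) ∧ (∀ k ∈ D.syz.hSet, r ≤ k) ∧
      (∀ k₁ ∈ D.syz.hSet, ∀ k₂ ∈ D.syz.hSet, k₂ - k₁ ≤ s) := by
  classical
  haveI : Finite D.idx := D.idx_finite
  haveI : Fintype D.idx := Fintype.ofFinite _
  -- the differential kills 1
  have hd1 : A.d 1 = 0 := by
    have h := A.leibniz (1 : A.carrier) A.one_mem
    simp only [one_mul, mul_one, zpow_zero, Units.val_one, one_smul] at h
    exact (left_eq_add.mp h)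
  -- H_0(A) ≠ 0, hence ia ≤ 0
  obtain ⟨ζ, hζg, hζd, hζnb⟩ := (hSetA_iff A sa).mp hsa.1
  have h0mem : (0 : ℤ) ∈ A.toDGModule.hSet := by
    rw [hSetA_iff]
    refine ⟨1, A.one_mem, hd1, ?_⟩
    rintro ⟨y, hy, hdy⟩
    apply hζnb
    have hy1 : y ∈ A.grading 1 := by rwa [zero_add] at hy
    refine ⟨y * ζ, ?_, ?_⟩
    · have := A.mul_mem hy1 hζg
      rwa [add_comm] at this
    · have h := A.leibniz ζ hy1
      rw [hdy, hζd] at h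
      simpa using h
  have hia0 : ia ≤ 0 := hia.2 h0mem
  have hsas : sa ≤ s := by omega
  -- homology of A vanishes above sa
  have hA : ∀ i : ℤ, sa < i → ∀ a ∈ A.grading i, A.d a = 0 →
      ∃ y ∈ A.grading (i + 1), A.d y = a := by
    intro i hi a ha hda
    by_contra hno
    have : i ∈ A.toDGModule.hSet := (hSetA_iff A i).mpr ⟨a, ha, hda, hno⟩
    have := hsa.2 this
    omega
  -- Part 2: inf H(syz) ≥ r
  have hinf : ∀ k ∈ D.syz.hSet, r ≤ k := by
    intro k hk
    by_contra hlt
    push_neg at hlt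
    obtain ⟨x, hxg, _, hxnb⟩ := hk
    rw [D.below k hlt] at hxg
    have hx0 : x = 0 := AddSubgroup.mem_bot.mp hxg
    exact hxnb ⟨0, zero_mem _, by rw [map_zero, hx0]⟩
  -- Part 1: sup H(syz) ≤ s + r
  have hsup : ∀ k ∈ D.syz.hSet, k ≤ s + r := by
    intro k hk
    by_contra hgt
    push_neg at hgt
    obtain ⟨x, hxg, hxd, hxnb⟩ := hk
    have hkr : r ≤ k := hinf k ⟨x, hxg, hxd, hxnb⟩
    have hαx_mem : D.α.toFun x ∈ D.L.grading k := D.α.map_grading hxg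
    have hαx_cyc : D.L.d (D.α.toFun x) = 0 := by
      rw [← D.α.map_d, hxd, map_zero]
    obtain ⟨w, hwg, hwd⟩ := acyclic_above sa hA D.S r D.deg_le k (by omega)
      _ hαx_mem hαx_cyc
    have hπw0 : D.π.toFun w = 0 := by
      have h1 : D.π.toFun w ∈ D.Kt.grading (k + 1) := D.π.map_grading hwg
      rw [D.trunc (k + 1) (by omega)] at h1
      exact AddSubgroup.mem_bot.mp h1
    obtain ⟨v, hv⟩ := (D.exact w).mp hπw0
    have hvg : v ∈ D.syz.grading (k + 1) :=
      mem_grading_of_image D.α D.α_inj v (k + 1) (by rw [hv]; exact hwg)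
    have hdv : D.syz.d v = x := by
      apply D.α_inj
      rw [D.α.map_d, hv, hwd]
    exact hxnb ⟨v, hvg, hdv⟩
  refine ⟨hsup, hinf, fun k₁ h₁ k₂ h₂ => ?_⟩
  have := hsup k₂ h₂
  have := hinf k₁ h₁
  omega
end

section
/- Let (A, m_A) be a local homologically bounded DG algebra with m_A = A_+ and A_0 a field, and let K be a homologically finite DG A-module with minimal semifree resolution F. If H(Syz_r(K)) = 0 for some r ≥ sup(H(K)), then K is perfect, i.e., K admits a semifree resolution with finite semibasis. -/
universe u v

namespace Stmt18Aux

open Finset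

/-! ### Sign lemmas -/

/-- `sgn n = (-1)^n` as an integer. -/
def sgn (n : ℤ) : ℤ := (((-1 : ℤˣ) ^ n : ℤˣ) : ℤ)

lemma sgn_add (a b : ℤ) : sgn (a + b) = sgn a * sgn b := by
  unfold sgn; rw [zpow_add]; push_cast; ring

lemma sgn_zero : sgn 0 = 1 := by unfold sgn; simp

lemma sgn_mul_self (a : ℤ) : sgn a * sgn a = 1 := by
  unfold sgn
  rw [← Units.val_mul, Int.units_mul_self]; rfl

lemma sgn_neg_one : sgn (-1) = -1 := by unfold sgn; simp

lemma sgn_neg (a : ℤ) : sgn (-a) = sgn a := by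
  have h1 : sgn (-a) * (sgn a * sgn a) = sgn (-a) := by rw [sgn_mul_self, mul_one]
  have h2 : sgn (-a) * sgn a = 1 := by rw [← sgn_add]; simp [sgn_zero]
  calc sgn (-a) = sgn (-a) * (sgn a * sgn a) := h1.symm
    _ = (sgn (-a) * sgn a) * sgn a := by ring
    _ = sgn a := by rw [h2, one_mul]

lemma sgn_sub_one (k : ℤ) : sgn (k - 1) = - sgn k := by
  have : k - 1 = k + (-1) := by ring
  rw [this, sgn_add, sgn_neg_one]; ring

lemma sgn_k_mul (k n : ℤ) : sgn k * sgn (k - n) = sgn n := by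
  have : sgn k * sgn (k - n) = sgn (k + (k - n)) := (sgn_add _ _).symm
  rw [this]
  have h2 : k + (k - n) = k + k + (-n) := by ring
  rw [h2, sgn_add, sgn_add, sgn_mul_self, one_mul, sgn_neg]

lemma sgn_mul_sub_one (n : ℤ) : sgn n * sgn (n - 1) = -1 := by
  rw [sgn_sub_one, mul_neg, sgn_mul_self]

/-! ### Homogeneous components -/

end Stmt18Aux

set_option maxHeartbeats 1000000
set_option synthInstance.maxHeartbeats 400000

namespace DGModule

open Stmt18Aux

variable {A : DGAlgebra.{u}}

open DirectSum in
/-- The degree-`i` component map of a DG module, as an additive hom. -/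
noncomputable def compHom (M : DGModule A) (i : ℤ) : M.carrier →+ M.carrier :=
  ((M.grading i).subtype : M.grading i →+ M.carrier).comp
    ((DFinsupp.evalAddMonoidHom i).comp
      ((AddEquiv.ofBijective (DirectSum.coeAddMonoidHom M.grading) M.isInternal).symm.toAddMonoidHom))

lemma compHom_mem (M : DGModule A) (i : ℤ) (x : M.carrier) : M.compHom i x ∈ M.grading i :=
  ((AddEquiv.ofBijective (DirectSum.coeAddMonoidHom M.grading) M.isInternal).symm x i).2

open DirectSum in
lemma dec_of_mem (M : DGModule A) {i : ℤ} {x : M.carrier} (hx : x ∈ M.grading i) :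
    (AddEquiv.ofBijective (DirectSum.coeAddMonoidHom M.grading) M.isInternal).symm x
      = DirectSum.of (fun j => M.grading j) i ⟨x, hx⟩ := by
  apply (AddEquiv.ofBijective (DirectSum.coeAddMonoidHom M.grading) M.isInternal).injective
  rw [AddEquiv.apply_symm_apply]
  exact (DirectSum.coeAddMonoidHom_of M.grading i ⟨x, hx⟩).symm

lemma compHom_of_mem_self (M : DGModule A) {i : ℤ} {x : M.carrier} (hx : x ∈ M.grading i) :
    M.compHom i x = x := by
  show ((((AddEquiv.ofBijective (DirectSum.coeAddMonoidHom M.grading) M.isInternal).symm x) i : M.grading i) : M.carrier) = x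
  rw [M.dec_of_mem hx, DirectSum.of_eq_same]

lemma compHom_of_mem_ne (M : DGModule A) {i j : ℤ} {x : M.carrier} (hx : x ∈ M.grading i)
    (h : j ≠ i) : M.compHom j x = 0 := by
  show ((((AddEquiv.ofBijective (DirectSum.coeAddMonoidHom M.grading) M.isInternal).symm x) j : M.grading j) : M.carrier) = 0
  rw [M.dec_of_mem hx, DirectSum.of_eq_of_ne _ _ _ h]
  rfl

open DirectSum in
lemma exists_support (M : DGModule A) (x : M.carrier) :
    ∃ s : Finset ℤ, (∀ j ∉ s, M.compHom j x = 0) ∧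
      ∀ s' : Finset ℤ, s ⊆ s' → ∑ j ∈ s', M.compHom j x = x := by
  classical
  set E := AddEquiv.ofBijective (DirectSum.coeAddMonoidHom M.grading) M.isInternal with hE
  refine ⟨(E.symm x).support, fun j hj => ?_, fun s' hs' => ?_⟩
  · show (((E.symm x) j : M.grading j) : M.carrier) = 0
    rw [DFinsupp.notMem_support_iff.mp hj]; rfl
  · have base : ∑ j ∈ (E.symm x).support, M.compHom j x = x := by
      have h0 := DirectSum.sum_support_of (E.symm x)
      calc ∑ j ∈ (E.symm x).support, M.compHom j x
          = ∑ j ∈ (E.symm x).support, E (DirectSum.of (fun k => M.grading k) j ((E.symm x) j)) :=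
            Finset.sum_congr rfl fun j _ => (DirectSum.coeAddMonoidHom_of M.grading j _).symm
        _ = E (∑ j ∈ (E.symm x).support, DirectSum.of (fun k => M.grading k) j ((E.symm x) j)) := by
            rw [map_sum]
        _ = E (E.symm x) := by rw [h0]
        _ = x := E.apply_symm_apply x
    have h2 : ∑ j ∈ s', M.compHom j x = ∑ j ∈ (E.symm x).support, M.compHom j x :=
      (Finset.sum_subset hs' (fun j _ hj => by
        show (((E.symm x) j : M.grading j) : M.carrier) = 0
        rw [DFinsupp.notMem_support_iff.mp hj]; rfl)).symm
    exact h2.trans base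

lemma homogeneous_induction (M : DGModule A) (C : M.carrier → Prop) (h0 : C 0)
    (hhom : ∀ (i : ℤ) (x : M.carrier), x ∈ M.grading i → C x)
    (hadd : ∀ x y, C x → C y → C (x + y)) : ∀ x, C x := by
  intro x
  obtain ⟨g, rfl⟩ := M.isInternal.surjective x
  induction g using DirectSum.induction_on with
  | zero => rw [map_zero]; exact h0
  | of i b => rw [DirectSum.coeAddMonoidHom_of]; exact hhom i b b.2
  | add g₁ g₂ h₁ h₂ => rw [map_add]; exact hadd _ _ h₁ h₂

lemma compHom_dghom {M N : DGModule A} (f : DGHom M N) (i : ℤ) (x : M.carrier) :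
    N.compHom i (f.toFun x) = f.toFun (M.compHom i x) := by
  induction x using homogeneous_induction M with
  | h0 => simp
  | hhom k x hx =>
    by_cases h : i = k
    · subst h
      rw [N.compHom_of_mem_self (f.map_grading hx), M.compHom_of_mem_self hx]
    · rw [N.compHom_of_mem_ne (f.map_grading hx) h, M.compHom_of_mem_ne hx h, map_zero]
  | hadd x y hx hy =>
    rw [map_add f.toFun, map_add (N.compHom i), hx, hy, map_add (M.compHom i), map_add f.toFun]

end DGModule
namespace Semibasis

open Stmt18Aux DGModule

variable {A : DGAlgebra.{u}}

/-- The degree-`j` component of an element of `A`. -/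
noncomputable def aComp (A : DGAlgebra.{u}) (j : ℤ) (a : A.carrier) : A.carrier :=
  A.toDGModule.compHom j a

lemma aComp_mem (j : ℤ) (a : A.carrier) : aComp A j a ∈ A.grading j :=
  A.toDGModule.compHom_mem j a

variable {L : DGModule A} {ι : Type v} [Fintype ι]

/-- Coordinates of a homogeneous element w.r.t. a semibasis are homogeneous. -/
lemma repr_mem (S : Semibasis L ι) {k : ℤ} {x : L.carrier}
    (hx : x ∈ L.grading k) (e : ι) : S.b.repr x e ∈ A.grading (k - S.deg e) := by
  classical
  choose s hs0 hsum using fun e' : ι => A.toDGModule.exists_support (S.b.repr x e')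
  set J : Finset ℤ := Finset.univ.biUnion (fun e' => (s e').image (· + S.deg e')) with hJ
  set y : ℤ → L.carrier :=
    fun j => ∑ e', (aComp A (j - S.deg e') (S.b.repr x e')) • S.b e' with hy
  have hymem : ∀ j, y j ∈ L.grading j := by
    intro j
    refine AddSubgroup.sum_mem _ (fun e' _ => ?_)
    have h1 := L.smul_mem (aComp_mem (j - S.deg e') (S.b.repr x e')) (S.mem e')
    have h2 : j - S.deg e' + S.deg e' = j := by ring
    rwa [h2] at h1
  have hsumy : ∑ j ∈ J, y j = x := by
    rw [hy]
    rw [Finset.sum_comm]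
    have hinner : ∀ e' : ι,
        ∑ j ∈ J, (aComp A (j - S.deg e') (S.b.repr x e')) • S.b e'
          = S.b.repr x e' • S.b e' := by
      intro e'
      rw [← Finset.sum_smul]
      congr 1
      have himg : ∑ j' ∈ J.image (· - S.deg e'), aComp A j' (S.b.repr x e')
          = ∑ j ∈ J, aComp A (j - S.deg e') (S.b.repr x e') :=
        Finset.sum_image (fun a _ b _ h => by omega)
      rw [← himg]
      apply hsum
      intro i hi
      rw [Finset.mem_image]
      refine ⟨i + S.deg e', ?_, by ring⟩
      rw [hJ, Finset.mem_biUnion]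
      exact ⟨e', Finset.mem_univ _, Finset.mem_image_of_mem _ hi⟩
    calc ∑ e', ∑ j ∈ J, (aComp A (j - S.deg e') (S.b.repr x e')) • S.b e'
        = ∑ e', S.b.repr x e' • S.b e' := Finset.sum_congr rfl (fun e' _ => hinner e')
      _ = x := S.b.sum_repr x
  by_cases hk : k ∈ J
  · have hxy : x = y k := by
      have h1 : L.compHom k x = ∑ j ∈ J, L.compHom k (y j) := by
        rw [← map_sum, hsumy]
      have h2 : ∑ j ∈ J, L.compHom k (y j) = y k := by
        rw [Finset.sum_eq_single k]
        · exact L.compHom_of_mem_self (hymem k)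
        · intro j _ hj
          exact L.compHom_of_mem_ne (hymem j) (Ne.symm hj)
        · intro h; exact absurd hk h
      rw [L.compHom_of_mem_self hx] at h1
      rw [h1, h2]
    have hr : ⇑(S.b.repr (∑ e', (fun e'' => aComp A (k - S.deg e'') (S.b.repr x e'')) e' • S.b e'))
        = fun e'' => aComp A (k - S.deg e'') (S.b.repr x e'') := Module.Basis.repr_sum_self _ _
    have : S.b.repr x e = aComp A (k - S.deg e) (S.b.repr x e) := by
      conv_lhs => rw [hxy, hy]
      exact congrFun hr e
    rw [this]
    exact aComp_mem _ _
  · have hx0 : x = 0 := by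
      have h1 : L.compHom k x = ∑ j ∈ J, L.compHom k (y j) := by
        rw [← map_sum, hsumy]
      have h2 : ∑ j ∈ J, L.compHom k (y j) = 0 := by
        refine Finset.sum_eq_zero (fun j hj => ?_)
        exact L.compHom_of_mem_ne (hymem j) (by rintro rfl; exact hk hj)
      rw [L.compHom_of_mem_self hx] at h1
      rw [h1, h2]
    rw [hx0, map_zero]
    exact AddSubgroup.zero_mem _
  
lemma repr_eq_zero (S : Semibasis L ι) {k : ℤ} {x : L.carrier}
    (hx : x ∈ L.grading k) {e : ι} (he : k < S.deg e) : S.b.repr x e = 0 := by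
  have h := S.repr_mem hx e
  rw [A.positive _ (by omega)] at h
  exact h

/-- `Basis.constr` with homogeneous values of degree `deg e + δ` shifts degrees by `δ`. -/
lemma constr_grading (S : Semibasis L ι) {N : DGModule A} {v : ι → N.carrier}
    {δ : ℤ} (hv : ∀ e, v e ∈ N.grading (S.deg e + δ)) {k : ℤ} {x : L.carrier}
    (hx : x ∈ L.grading k) : S.b.constr ℕ v x ∈ N.grading (k + δ) := by
  rw [Module.Basis.constr_apply_fintype]
  refine AddSubgroup.sum_mem _ (fun e _ => ?_)
  have h1 := N.smul_mem (S.repr_mem hx e) (hv e)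
  have h2 : k - S.deg e + (S.deg e + δ) = k + δ := by ring
  rw [h2] at h1
  exact h1

/-- Locality: `constr` only depends on the values at indices of degree at most the
degree of the (homogeneous) argument. -/
lemma constr_congr (S : Semibasis L ι) {N : DGModule A} {v v' : ι → N.carrier}
    {k : ℤ} (h : ∀ e, S.deg e ≤ k → v e = v' e) {x : L.carrier} (hx : x ∈ L.grading k) :
    S.b.constr ℕ v x = S.b.constr ℕ v' x := by
  rw [Module.Basis.constr_apply_fintype, Module.Basis.constr_apply_fintype]
  refine Finset.sum_congr rfl (fun e _ => ?_)
  by_cases he : S.deg e ≤ k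
  · rw [h e he]
  · rw [Module.Basis.equivFun_apply, S.repr_eq_zero hx (by omega), zero_smul, zero_smul]

/-- Expansion of the differential of a homogeneous element in semibasis coordinates. -/
lemma d_expand (S : Semibasis L ι) {k : ℤ} {x : L.carrier}
    (hx : x ∈ L.grading k) :
    L.d x = ∑ e, (A.d (S.b.repr x e) • S.b e
      + sgn (k - S.deg e) • (S.b.repr x e • L.d (S.b e))) := by
  conv_lhs => rw [← S.b.sum_repr x]
  rw [map_sum]
  refine Finset.sum_congr rfl (fun e _ => ?_)
  exact L.leibniz (S.b e) (S.repr_mem hx e)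

end Semibasis
namespace Semibasis

open Stmt18Aux DGModule

variable {A : DGAlgebra.{u}} {L : DGModule A} {ι : Type v} [Fintype ι]

/-- If the prospective images of the basis elements of degree `≤ k` are compatible with
the differentials, then `constr` commutes with `d` on homogeneous elements of degree `k`. -/
lemma d_constr (S : Semibasis L ι) {Fr : DGModule A} {u : ι → Fr.carrier} {k : ℤ}
    (hlow : ∀ e, S.deg e ≤ k → Fr.d (u e) = S.b.constr ℕ u (L.d (S.b e)))
    {x : L.carrier} (hx : x ∈ L.grading k) :
    Fr.d (S.b.constr ℕ u x) = S.b.constr ℕ u (L.d x) := by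
  rw [Module.Basis.constr_apply_fintype, map_sum, S.d_expand hx, map_sum]
  refine Finset.sum_congr rfl (fun e _ => ?_)
  rw [Module.Basis.equivFun_apply]
  by_cases he : S.deg e ≤ k
  · rw [Fr.leibniz (u e) (S.repr_mem hx e)]
    simp only [map_add, map_smul, map_zsmul, Module.Basis.constr_basis]
    rw [hlow e he]
    rfl
  · rw [S.repr_eq_zero hx (by omega)]
    simp

/-- The homotopy identity for the partial lift, on homogeneous elements of degree `k`. -/
lemma homotopy_identity (S : Semibasis L ι) {Fr Kt : DGModule A}
    (π : DGHom L Kt) (q : DGHom Fr Kt)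
    {u : ι → Fr.carrier} {c : ι → Kt.carrier}
    (hc : ∀ e, c e ∈ Kt.grading (S.deg e + 1)) {k : ℤ}
    (hlow : ∀ e, S.deg e ≤ k → π.toFun (S.b e) - q.toFun (u e)
      = sgn (S.deg e) • (Kt.d (c e) - S.b.constr ℕ c (L.d (S.b e))))
    {x : L.carrier} (hx : x ∈ L.grading k) :
    π.toFun x - q.toFun (S.b.constr ℕ u x)
      = Kt.d (sgn k • S.b.constr ℕ c x) + sgn (k - 1) • S.b.constr ℕ c (L.d x) := by
  have hπ : π.toFun x = ∑ e, S.b.repr x e • π.toFun (S.b e) := by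
    conv_lhs => rw [← S.b.sum_repr x]
    rw [map_sum]
    exact Finset.sum_congr rfl fun e _ => map_smul _ _ _
  have hq : q.toFun (S.b.constr ℕ u x) = ∑ e, S.b.repr x e • q.toFun (u e) := by
    rw [Module.Basis.constr_apply_fintype, map_sum]
    refine Finset.sum_congr rfl fun e _ => ?_
    rw [Module.Basis.equivFun_apply, map_smul]
  have hL : π.toFun x - q.toFun (S.b.constr ℕ u x)
      = ∑ e, sgn (S.deg e) •
          (S.b.repr x e • (Kt.d (c e) - S.b.constr ℕ c (L.d (S.b e)))) := by
    rw [hπ, hq, ← Finset.sum_sub_distrib]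
    refine Finset.sum_congr rfl fun e _ => ?_
    by_cases he : S.deg e ≤ k
    · rw [← smul_sub, hlow e he, smul_comm]
    · rw [S.repr_eq_zero hx (by omega)]
      simp
  have hW : S.b.constr ℕ c x = ∑ e, S.b.repr x e • c e := by
    rw [Module.Basis.constr_apply_fintype]
    exact Finset.sum_congr rfl fun e _ => by rw [Module.Basis.equivFun_apply]
  have hdW : Kt.d (S.b.constr ℕ c x)
      = ∑ e, (A.d (S.b.repr x e) • c e
          + sgn (k - S.deg e) • (S.b.repr x e • Kt.d (c e))) := by
    rw [hW, map_sum]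
    exact Finset.sum_congr rfl fun e _ => Kt.leibniz (c e) (S.repr_mem hx e)
  have hWd : S.b.constr ℕ c (L.d x)
      = ∑ e, (A.d (S.b.repr x e) • c e
          + sgn (k - S.deg e) • (S.b.repr x e • S.b.constr ℕ c (L.d (S.b e)))) := by
    rw [S.d_expand hx, map_sum]
    refine Finset.sum_congr rfl fun e _ => ?_
    simp only [map_add, map_smul, map_zsmul, Module.Basis.constr_basis]
  rw [hL, map_zsmul Kt.d, hdW, hWd, Finset.smul_sum, Finset.smul_sum, ← Finset.sum_add_distrib]
  refine (Finset.sum_congr rfl fun e _ => ?_).symm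
  rw [smul_add, smul_add, smul_smul, smul_smul, sgn_k_mul, sgn_sub_one, neg_mul, sgn_k_mul,
    smul_sub, smul_sub, neg_smul (sgn k), neg_smul (sgn (S.deg e))]
  abel

end Semibasis
namespace Semibasis

open Stmt18Aux DGModule

variable {A : DGAlgebra.{u}} {L : DGModule A} {ι : Type v} [Fintype ι]

/-- Existence of a semifree lift of `π : L → Kt` along the quasi-isomorphism
`q : Fr → Kt`, together with the homotopy data. -/
lemma exists_lift (S : Semibasis L ι) {Fr Kt : DGModule A}
    (π : DGHom L Kt) (q : DGHom Fr Kt) (hq : q.IsQuasiIso) :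
    ∃ (u : ι → Fr.carrier) (c : ι → Kt.carrier),
      (∀ e, u e ∈ Fr.grading (S.deg e)) ∧ (∀ e, c e ∈ Kt.grading (S.deg e + 1)) ∧
      (∀ e, Fr.d (u e) = S.b.constr ℕ u (L.d (S.b e))) ∧
      (∀ e, π.toFun (S.b e) - q.toFun (u e)
        = sgn (S.deg e) • (Kt.d (c e) - S.b.constr ℕ c (L.d (S.b e)))) := by
  classical
  obtain ⟨m₀, hm₀⟩ := (Set.finite_range (fun e : ι => S.deg e)).bddBelow
  obtain ⟨M₁, hM₁⟩ := (Set.finite_range (fun e : ι => S.deg e)).bddAbove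
  have hm₀' : ∀ e, m₀ ≤ S.deg e := fun e => hm₀ ⟨e, rfl⟩
  have hM₁' : ∀ e, S.deg e ≤ M₁ := fun e => hM₁ ⟨e, rfl⟩
  have main : ∀ t : ℕ, ∃ (u : ι → Fr.carrier) (c : ι → Kt.carrier),
      (∀ e, u e ∈ Fr.grading (S.deg e)) ∧ (∀ e, c e ∈ Kt.grading (S.deg e + 1)) ∧
      ∀ e, S.deg e < m₀ + t →
        (Fr.d (u e) = S.b.constr ℕ u (L.d (S.b e)) ∧
          π.toFun (S.b e) - q.toFun (u e)
            = sgn (S.deg e) • (Kt.d (c e) - S.b.constr ℕ c (L.d (S.b e)))) := by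
    intro t
    induction t with
    | zero =>
      exact ⟨fun _ => 0, fun _ => 0, fun e => zero_mem _, fun e => zero_mem _,
        fun e he => absurd (hm₀' e) (by omega)⟩
    | succ t ih =>
      obtain ⟨u, c, hu, hc, hGood⟩ := ih
      have hnew : ∀ e : ι, S.deg e = m₀ + t → ∃ (ue : Fr.carrier) (ce : Kt.carrier),
          ue ∈ Fr.grading (S.deg e) ∧ ce ∈ Kt.grading (S.deg e + 1) ∧
          Fr.d ue = S.b.constr ℕ u (L.d (S.b e)) ∧
          π.toFun (S.b e) - q.toFun ue
            = sgn (S.deg e) • (Kt.d ce - S.b.constr ℕ c (L.d (S.b e))) := by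
        intro e he
        set n := S.deg e with hn
        set z₁ := S.b.constr ℕ u (L.d (S.b e)) with hz₁
        have hdbe : L.d (S.b e) ∈ L.grading (n - 1) := L.d_mem (S.mem e)
        have hz₁g : z₁ ∈ Fr.grading (n - 1) := by
          have h := S.constr_grading (N := Fr) (v := u) (δ := 0)
            (fun e' => by rw [add_zero]; exact hu e') hdbe
          rwa [add_zero] at h
        have hlowd : ∀ e', S.deg e' ≤ n - 1 →
            Fr.d (u e') = S.b.constr ℕ u (L.d (S.b e')) :=
          fun e' h' => (hGood e' (by omega)).1
        have hlowh : ∀ e', S.deg e' ≤ n - 1 →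
            π.toFun (S.b e') - q.toFun (u e')
              = sgn (S.deg e') • (Kt.d (c e') - S.b.constr ℕ c (L.d (S.b e'))) :=
          fun e' h' => (hGood e' (by omega)).2
        have hz₁cyc : Fr.d z₁ = 0 := by
          rw [hz₁, S.d_constr hlowd hdbe, L.d_d, map_zero]
        have hhom := S.homotopy_identity π q hc hlowh hdbe
        rw [L.d_d, map_zero, smul_zero, add_zero, map_zsmul Kt.d, ← hz₁] at hhom
        have hπd : π.toFun (L.d (S.b e)) = Kt.d (π.toFun (S.b e)) := π.map_d _
        have hqz₁ : q.toFun z₁ = Kt.d (π.toFun (S.b e))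
            - sgn (n - 1) • Kt.d (S.b.constr ℕ c (L.d (S.b e))) := by
          rw [hπd] at hhom
          have h2 := sub_eq_iff_eq_add.mp hhom
          rw [h2]
          abel
        have hWdbe : S.b.constr ℕ c (L.d (S.b e)) ∈ Kt.grading (n - 1 + 1) :=
          S.constr_grading (N := Kt) (v := c) (δ := 1) hc hdbe
        have hπbe : π.toFun (S.b e) ∈ Kt.grading n := π.map_grading (S.mem e)
        have hn1 : n - 1 + 1 = n := by ring
        obtain ⟨y, hy, hdy⟩ := hq.2 (n-1) z₁ hz₁g hz₁cyc
          ⟨π.toFun (S.b e) - sgn (n-1) • S.b.constr ℕ c (L.d (S.b e)),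
            sub_mem (by rw [hn1]; exact hπbe) (AddSubgroup.zsmul_mem _ hWdbe _),
            by rw [map_sub, map_zsmul, hqz₁]⟩
        rw [hn1] at hy
        set s₀ := sgn n • (π.toFun (S.b e) - q.toFun y) + S.b.constr ℕ c (L.d (S.b e))
          with hs₀
        have hs₀mem : s₀ ∈ Kt.grading n := by
          refine add_mem (AddSubgroup.zsmul_mem _ (sub_mem hπbe (q.map_grading hy)) _) ?_
          rw [← hn1]; exact hWdbe
        have hs₀cyc : Kt.d s₀ = 0 := by
          rw [hs₀, map_add, map_zsmul, map_sub, ← q.map_d y, hdy, hqz₁, sub_sub_cancel,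
            smul_smul, sgn_mul_sub_one, neg_one_smul]
          exact neg_add_cancel _
        obtain ⟨x₀, hx₀g, hx₀cyc, w, hwg, hdw⟩ := hq.1 n s₀ hs₀mem hs₀cyc
        refine ⟨y + sgn n • x₀, -w, ?_, ?_, ?_, ?_⟩
        · exact add_mem hy (AddSubgroup.zsmul_mem _ hx₀g _)
        · exact neg_mem hwg
        · rw [map_add, map_zsmul, hdy, hx₀cyc, smul_zero, add_zero, hz₁]
        · rw [map_add q.toFun, map_zsmul q.toFun, map_neg, hdw, hs₀]
          simp only [smul_sub, smul_add, smul_neg, neg_sub, smul_smul, sgn_mul_self, one_smul]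
          abel
      choose uf cf hmem1 hmem2 hd hh using hnew
      refine ⟨fun e => if he : S.deg e = m₀ + t then uf e he else u e,
              fun e => if he : S.deg e = m₀ + t then cf e he else c e, ?_, ?_, ?_⟩
      · intro e
        by_cases hcase : S.deg e = m₀ + t
        · simp only; rw [dif_pos hcase]; exact hmem1 e hcase
        · simp only; rw [dif_neg hcase]; exact hu e
      · intro e
        by_cases hcase : S.deg e = m₀ + t
        · simp only; rw [dif_pos hcase]; exact hmem2 e hcase
        · simp only; rw [dif_neg hcase]; exact hc e
      · intro e he
        have hdbe : L.d (S.b e) ∈ L.grading (S.deg e - 1) := L.d_mem (S.mem e)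
        by_cases hcase : S.deg e = m₀ + t
        · have hcu : S.b.constr ℕ (fun e' => if he' : S.deg e' = m₀ + t then uf e' he' else u e')
              (L.d (S.b e)) = S.b.constr ℕ u (L.d (S.b e)) :=
            S.constr_congr (fun e' h' => dif_neg (by omega)) hdbe
          have hcc : S.b.constr ℕ (fun e' => if he' : S.deg e' = m₀ + t then cf e' he' else c e')
              (L.d (S.b e)) = S.b.constr ℕ c (L.d (S.b e)) :=
            S.constr_congr (fun e' h' => dif_neg (by omega)) hdbe
          simp only [dif_pos hcase]
          rw [hcu, hcc]
          exact ⟨hd e hcase, hh e hcase⟩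
        · have h2 : S.deg e < m₀ + t := by omega
          have hcu : S.b.constr ℕ (fun e' => if he' : S.deg e' = m₀ + t then uf e' he' else u e')
              (L.d (S.b e)) = S.b.constr ℕ u (L.d (S.b e)) :=
            S.constr_congr (fun e' h' => dif_neg (by omega)) hdbe
          have hcc : S.b.constr ℕ (fun e' => if he' : S.deg e' = m₀ + t then cf e' he' else c e')
              (L.d (S.b e)) = S.b.constr ℕ c (L.d (S.b e)) :=
            S.constr_congr (fun e' h' => dif_neg (by omega)) hdbe
          simp only [dif_neg hcase]
          rw [hcu, hcc]
          exact hGood e h2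
  obtain ⟨u, c, hu, hc, hG⟩ := main (M₁ + 1 - m₀).toNat
  have hbound : ∀ e, S.deg e < m₀ + ((M₁ + 1 - m₀).toNat : ℤ) := by
    intro e
    have h1 := hm₀' e
    have h2 := hM₁' e
    omega
  exact ⟨u, c, hu, hc, fun e => (hG e (hbound e)).1, fun e => (hG e (hbound e)).2⟩

end Semibasis
/-- Let `(A, m_A)` be a local homologically bounded DG algebra with
`m_A = A_+` and `A_0` a field, and let `K` be a homologically finite DG `A`-module.
If `H(Syz_r K) = 0` for some `r ≥ sup H(K)`, then `K` is perfect, i.e. `K` admits a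
semifree resolution with a finite semibasis. -/
theorem stmt18 (A : DGAlgebra.{u})
    (hfield : ∀ a ∈ A.grading 0, a ≠ 0 → IsUnit a)
    (hAbdd : BddAbove A.toDGModule.hSet ∧ BddBelow A.toDGModule.hSet)
    (K : DGModule A)
    (hKbdd : BddAbove K.hSet ∧ BddBelow K.hSet)
    (r : ℤ) (hr : ∀ k ∈ K.hSet, k ≤ r)
    (D : SyzygyData A K r)
    -- minimality of the resolution: `∂(Fres) ⊆ m_A Fres`
    (hmin : ∀ y : D.Fres.carrier, D.Fres.d y ∈ mAL D.Fres)
    (hH : D.syz.hSet = ∅) :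
    ∃ (F : DGModule A) (ι : Type u) (_ : Semibasis F ι) (φ : DGHom F K),
      Finite ι ∧ φ.IsQuasiIso := by
  classical
  open Stmt18Aux DGModule Semibasis in
  have hfin : Finite D.idx := D.idx_finite
  cases nonempty_fintype D.idx
  -- Every homogeneous cycle of `syz` is a boundary.
  have hsyz : ∀ (i : ℤ) (y : D.syz.carrier), y ∈ D.syz.grading i → D.syz.d y = 0 →
      ∃ t ∈ D.syz.grading (i + 1), D.syz.d t = y := by
    intro i y hy hdy
    by_contra hcon
    have hmem : i ∈ D.syz.hSet := ⟨y, hy, hdy, hcon⟩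
    rw [hH] at hmem
    exact hmem
  have πα : ∀ t, D.π.toFun (D.α.toFun t) = 0 := fun t => (D.exact _).mpr ⟨t, rfl⟩
  -- Step 1: `π : L → Kt` is a quasi-isomorphism.
  have hπqi : D.π.IsQuasiIso := by
    constructor
    · intro i z hz hdz
      obtain ⟨x₀, hx₀⟩ := D.π_surj z
      set x := DGModule.compHom D.L i x₀ with hx
      have hπx : D.π.toFun x = z := by
        rw [hx, ← DGModule.compHom_dghom D.π, hx₀, D.Kt.compHom_of_mem_self hz]
      have hxg : x ∈ D.L.grading i := D.L.compHom_mem i x₀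
      have hdxker : D.π.toFun (D.L.d x) = 0 := by
        rw [D.π.map_d, hπx, hdz]
      obtain ⟨y, hy⟩ := (D.exact _).mp hdxker
      have hαy' : D.α.toFun (DGModule.compHom D.syz (i-1) y) = D.L.d x := by
        rw [← DGModule.compHom_dghom D.α, hy, D.L.compHom_of_mem_self (D.L.d_mem hxg)]
      have hdy' : D.syz.d (DGModule.compHom D.syz (i-1) y) = 0 := by
        apply D.α_inj
        rw [D.α.map_d, hαy', D.L.d_d, map_zero]
      obtain ⟨t, htg, hdt⟩ := hsyz (i-1) _ (D.syz.compHom_mem _ _) hdy'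
      have hi : i - 1 + 1 = i := by ring
      rw [hi] at htg
      refine ⟨x - D.α.toFun t, sub_mem hxg (D.α.map_grading htg), ?_, 0, zero_mem _, ?_⟩
      · rw [map_sub, ← D.α.map_d, hdt, hαy', sub_self]
      · rw [map_zero, map_sub, hπx, πα t, sub_zero, sub_self]
    · rintro i x hx hdx ⟨w, hw, hdw⟩
      obtain ⟨u₀, hu₀⟩ := D.π_surj w
      set u := DGModule.compHom D.L (i+1) u₀ with hu
      have hπu : D.π.toFun u = w := by
        rw [hu, ← DGModule.compHom_dghom D.π, hu₀, D.Kt.compHom_of_mem_self hw]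
      have hug : u ∈ D.L.grading (i+1) := D.L.compHom_mem _ _
      have hdug : D.L.d u ∈ D.L.grading i := by
        have h := D.L.d_mem hug
        rwa [show i + 1 - 1 = i by ring] at h
      have hker : D.π.toFun (x - D.L.d u) = 0 := by
        rw [map_sub, D.π.map_d, hπu, hdw, sub_self]
      obtain ⟨y, hy⟩ := (D.exact _).mp hker
      have hαy' : D.α.toFun (DGModule.compHom D.syz i y) = x - D.L.d u := by
        rw [← DGModule.compHom_dghom D.α, hy, D.L.compHom_of_mem_self (sub_mem hx hdug)]
      have hdy' : D.syz.d (DGModule.compHom D.syz i y) = 0 := by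
        apply D.α_inj
        rw [D.α.map_d, hαy', map_sub, hdx, D.L.d_d, sub_zero, map_zero]
      obtain ⟨t, htg, hdt⟩ := hsyz i _ (D.syz.compHom_mem _ _) hdy'
      refine ⟨u + D.α.toFun t, add_mem hug (D.α.map_grading htg), ?_⟩
      rw [map_add, ← D.α.map_d, hdt, hαy']
      abel
  -- Step 2: lift `π` along the quasi-isomorphism `toKt : Fres → Kt`.
  obtain ⟨u, c, hu, hc, hdcomp, hhomot⟩ := D.S.exists_lift D.π D.toKt D.toKt_qi
  set ψlin := D.S.b.constr ℕ u with hψlin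
  set W := D.S.b.constr ℕ c with hW
  have hψgr : ∀ {i : ℤ} {x}, x ∈ D.L.grading i → ψlin x ∈ D.Fres.grading i := by
    intro i x hx
    have h := D.S.constr_grading (N := D.Fres) (v := u) (δ := 0)
      (fun e => by rw [add_zero]; exact hu e) hx
    rwa [add_zero] at h
  have hWgr : ∀ {i : ℤ} {x}, x ∈ D.L.grading i → W x ∈ D.Kt.grading (i + 1) :=
    fun hx => D.S.constr_grading (N := D.Kt) (v := c) (δ := 1) hc hx
  have hψd : ∀ x, ψlin (D.L.d x) = D.Fres.d (ψlin x) := by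
    intro x
    induction x using DGModule.homogeneous_induction D.L with
    | h0 => rw [map_zero, map_zero, map_zero]
    | hhom k x hx => exact (D.S.d_constr (fun e _ => hdcomp e) hx).symm
    | hadd x y hx hy =>
      rw [map_add D.L.d, map_add ψlin, hx, hy, ← map_add D.Fres.d, ← map_add ψlin]
  have hθ : ∀ (i : ℤ) (x), x ∈ D.L.grading i → D.L.d x = 0 →
      D.π.toFun x - D.toKt.toFun (ψlin x) = D.Kt.d (sgn i • W x) := by
    intro i x hx hdx
    have h := D.S.homotopy_identity D.π D.toKt hc (fun e _ => hhomot e) hx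
    rwa [hdx, map_zero, smul_zero, add_zero] at h
  -- Step 3: `ψ` is a quasi-isomorphism.
  have hψsurj : ∀ (i : ℤ) (z), z ∈ D.Fres.grading i → D.Fres.d z = 0 →
      ∃ x ∈ D.L.grading i, D.L.d x = 0 ∧
        ∃ v ∈ D.Fres.grading (i+1), D.Fres.d v = ψlin x - z := by
    intro i z hz hdz
    have hqz_cyc : D.Kt.d (D.toKt.toFun z) = 0 := by
      rw [← D.toKt.map_d, hdz, map_zero]
    obtain ⟨x, hxg, hxc, w₁, hw₁g, hdw₁⟩ :=
      hπqi.1 i (D.toKt.toFun z) (D.toKt.map_grading hz) hqz_cyc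
    have hθx := hθ i x hxg hxc
    have hqdiff : D.toKt.toFun (ψlin x - z) = D.Kt.d (w₁ - sgn i • W x) := by
      rw [map_sub, map_sub, map_zsmul]
      have h1 : D.toKt.toFun (ψlin x) = D.π.toFun x - D.Kt.d (sgn i • W x) := by
        rw [← hθx]; abel
      rw [h1, hdw₁, map_zsmul]
      abel
    have hcyc : D.Fres.d (ψlin x - z) = 0 := by
      rw [map_sub, ← hψd x, hxc, map_zero, hdz, sub_zero]
    obtain ⟨v, hvg, hdv⟩ := D.toKt_qi.2 i (ψlin x - z) (sub_mem (hψgr hxg) hz) hcyc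
      ⟨w₁ - sgn i • W x,
        sub_mem hw₁g (AddSubgroup.zsmul_mem _ (hWgr hxg) _), hqdiff.symm⟩
    exact ⟨x, hxg, hxc, v, hvg, hdv⟩
  have hψinj : ∀ (i : ℤ) (x), x ∈ D.L.grading i → D.L.d x = 0 →
      (∃ v ∈ D.Fres.grading (i+1), D.Fres.d v = ψlin x) →
      ∃ y ∈ D.L.grading (i+1), D.L.d y = x := by
    rintro i x hxg hxc ⟨v, hvg, hdv⟩
    have hθx := hθ i x hxg hxc
    have hkey : D.Kt.d (D.toKt.toFun v + sgn i • W x) = D.π.toFun x := by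
      rw [map_add, ← D.toKt.map_d, hdv]
      have h2 := sub_eq_iff_eq_add.mp hθx
      rw [h2]
      abel
    exact hπqi.2 i x hxg hxc
      ⟨D.toKt.toFun v + sgn i • W x,
        add_mem (D.toKt.map_grading hvg) (AddSubgroup.zsmul_mem _ (hWgr hxg) _), hkey⟩
  -- Step 4: assemble the quasi-isomorphism `toK ∘ ψ : L → K`.
  refine ⟨D.L, D.idx, D.S,
    { toFun := D.toK.toFun.comp ψlin
      map_d := fun x => by
        simp only [LinearMap.comp_apply]
        rw [hψd x, D.toK.map_d]
      map_grading := fun {i x} hx => D.toK.map_grading (hψgr hx) },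
    D.idx_finite, ?_, ?_⟩
  · intro i z hz hdz
    obtain ⟨x₁, hx₁g, hx₁c, w, hwg, hdw⟩ := D.toK_qi.1 i z hz hdz
    obtain ⟨x, hxg, hxc, v, hvg, hdv⟩ := hψsurj i x₁ hx₁g hx₁c
    refine ⟨x, hxg, hxc, D.toK.toFun v + w, add_mem (D.toK.map_grading hvg) hwg, ?_⟩
    simp only [LinearMap.comp_apply]
    rw [map_add, ← D.toK.map_d, hdv, hdw, map_sub]
    abel
  · rintro i x hxg hxc ⟨w, hwg, hdw⟩
    simp only [LinearMap.comp_apply] at hdw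
    have hψxc : D.Fres.d (ψlin x) = 0 := by
      rw [← hψd x, hxc, map_zero]
    obtain ⟨v, hvg, hdv⟩ := D.toK_qi.2 i (ψlin x) (hψgr hxg) hψxc ⟨w, hwg, hdw⟩
    exact hψinj i x hxg hxc ⟨v, hvg, hdv⟩
end
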